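/- The SVG(r,σ,0) distribution is a fixed point of the centered equilibrium transformation of order r: if Z ~ SVG(r,σ,0), then E[Z f(Z)] = σ² E[Z f''(Z) + r f'(Z)] for all twice-differentiable f with f, f', f'' bounded. -/

import Mathlib

open MeasureTheory ProbabilityTheory Real Set Filter Topology
open scoped ENNReal NNReal

namespace SVGAux

noncomputable def phi (y : ℝ) : ℝ := (Real.sqrt (2 * Real.pi))⁻¹ * Real.exp (-(y ^ 2 / 2))

lemma phi_eq : gaussianPDFReal 0 1 = phi := by
  funext y
  simp [gaussianPDFReal, phi, neg_div]

lemma phi_nonneg (y : ℝ) : 0 ≤ phi y := by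
  unfold phi; positivity

lemma phi_continuous : Continuous phi := by
  unfold phi; fun_prop

lemma N_eq : gaussianReal 0 1 = volume.withDensity (fun y => ENNReal.ofReal (phi y)) := by
  rw [gaussianReal_of_var_ne_zero 0 one_ne_zero]
  congr 1
  funext y
  rw [gaussianPDF, phi_eq]

lemma integral_withDensity_ofReal {p : ℝ → ℝ} (hp : Measurable p) (hp0 : ∀ x, 0 ≤ p x)
    (g : ℝ → ℝ) :
    ∫ x, g x ∂(volume.withDensity (fun x => ENNReal.ofReal (p x))) = ∫ x, p x * g x := by
  have h : (fun x => ENNReal.ofReal (p x)) = fun x => ((p x).toNNReal : ℝ≥0∞) := rfl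
  rw [h, integral_withDensity_eq_integral_smul hp.real_toNNReal]
  congr 1
  funext x
  simp [NNReal.smul_def, Real.coe_toNNReal _ (hp0 x)]

lemma integrable_withDensity_ofReal {p : ℝ → ℝ} (hp : Measurable p) (hp0 : ∀ x, 0 ≤ p x)
    {g : ℝ → ℝ} :
    Integrable g (volume.withDensity (fun x => ENNReal.ofReal (p x))) ↔
      Integrable (fun x => p x * g x) volume := by
  have h : (fun x => ENNReal.ofReal (p x)) = fun x => ((p x).toNNReal : ℝ≥0∞) := rfl
  rw [h, integrable_withDensity_iff_integrable_smul hp.real_toNNReal]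
  apply integrable_congr
  filter_upwards with x
  simp [NNReal.smul_def, Real.coe_toNNReal _ (hp0 x)]



lemma hasDerivAt_phi (y : ℝ) : HasDerivAt phi (-y * phi y) y := by
  have h1 : HasDerivAt (fun y : ℝ => -(y ^ 2 / 2)) (-y) y := by
    have := ((hasDerivAt_pow 2 y).div_const 2).neg
    exact this.congr_deriv (Eq.symm (by ring))
  have h2 := (h1.exp).const_mul (Real.sqrt (2 * Real.pi))⁻¹
  exact h2.congr_deriv (Eq.symm (by unfold phi; ring))

lemma phi_integrable : Integrable phi := by
  have : Integrable (fun y : ℝ => (Real.sqrt (2 * Real.pi))⁻¹ * Real.exp (-(2⁻¹ : ℝ) * y ^ 2)) :=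
    (integrable_exp_neg_mul_sq (by norm_num)).const_mul _
  apply this.congr
  filter_upwards with y
  unfold phi
  ring_nf

lemma abs_mul_phi_integrable : Integrable (fun y => |y| * phi y) := by
  have h : Integrable (fun y : ℝ => (Real.sqrt (2 * Real.pi))⁻¹ * |y * Real.exp (-(2⁻¹ : ℝ) * y ^ 2)|) :=
    ((integrable_mul_exp_neg_mul_sq (b := 2⁻¹) (by norm_num)).abs).const_mul _
  apply h.congr
  filter_upwards with y
  unfold phi
  rw [abs_mul, Real.abs_exp]
  ring_nf

lemma sq_half_tendsto_atTop : Tendsto (fun y : ℝ => y ^ 2 / 2) atTop atTop :=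
  (tendsto_pow_atTop two_ne_zero).atTop_div_const (by norm_num)

lemma sq_half_tendsto_atBot : Tendsto (fun y : ℝ => y ^ 2 / 2) atBot atTop := by
  have h : Tendsto (fun y : ℝ => (-y) ^ 2 / 2) atBot atTop :=
    sq_half_tendsto_atTop.comp tendsto_neg_atBot_atTop
  refine h.congr fun y => by ring

lemma phi_tendsto_atTop : Tendsto phi atTop (𝓝 0) := by
  have h : Tendsto (fun y : ℝ => Real.exp (-(y ^ 2 / 2))) atTop (𝓝 0) :=
    Real.tendsto_exp_atBot.comp (tendsto_neg_atTop_atBot.comp sq_half_tendsto_atTop)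
  have := h.const_mul (Real.sqrt (2 * Real.pi))⁻¹
  unfold phi
  simpa only [mul_zero] using this

lemma phi_tendsto_atBot : Tendsto phi atBot (𝓝 0) := by
  have h : Tendsto (fun y : ℝ => Real.exp (-(y ^ 2 / 2))) atBot (𝓝 0) :=
    Real.tendsto_exp_atBot.comp (tendsto_neg_atTop_atBot.comp sq_half_tendsto_atBot)
  have := h.const_mul (Real.sqrt (2 * Real.pi))⁻¹
  unfold phi
  simpa only [mul_zero] using this



lemma gaussian_ibp {g g' : ℝ → ℝ} (hg : ∀ x, HasDerivAt g (g' x) x)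
    (hg'c : Continuous g') {Cg Cg' : ℝ} (hCg : ∀ x, |g x| ≤ Cg) (hCg' : ∀ x, |g' x| ≤ Cg') :
    ∫ x, x * g x ∂(gaussianReal 0 1) = ∫ x, g' x ∂(gaussianReal 0 1) := by
  have hgc : Continuous g := by
    rw [continuous_iff_continuousAt]; exact fun x => (hg x).continuousAt
  have hphi_meas : Measurable phi := phi_continuous.measurable
  rw [N_eq, integral_withDensity_ofReal hphi_meas phi_nonneg,
    integral_withDensity_ofReal hphi_meas phi_nonneg]
  have I1 : Integrable (fun x => phi x * g' x) := by
    refine Integrable.mono' (phi_integrable.const_mul Cg') (phi_continuous.mul hg'c).aestronglyMeasurable ?_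
    filter_upwards with x
    rw [Real.norm_eq_abs, abs_mul, abs_of_nonneg (phi_nonneg x)]
    calc phi x * |g' x| ≤ phi x * Cg' := by
          exact mul_le_mul_of_nonneg_left (hCg' x) (phi_nonneg x)
      _ = Cg' * phi x := by ring
  have I2 : Integrable (fun x => x * (phi x * g x)) := by
    refine Integrable.mono' (abs_mul_phi_integrable.const_mul Cg)
      ((continuous_id.mul (phi_continuous.mul hgc)).aestronglyMeasurable) ?_
    filter_upwards with x
    rw [Real.norm_eq_abs, abs_mul, abs_mul, abs_of_nonneg (phi_nonneg x)]
    have h1 : |x| * (phi x * |g x|) ≤ |x| * (phi x * Cg) := by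
      have := mul_le_mul_of_nonneg_left (hCg x) (phi_nonneg x)
      exact mul_le_mul_of_nonneg_left this (abs_nonneg x)
    calc |x| * (phi x * |g x|) ≤ |x| * (phi x * Cg) := h1
      _ = Cg * (|x| * phi x) := by ring
  set F := fun x => phi x * g x with hF
  have hCg0 : 0 ≤ Cg := le_trans (abs_nonneg _) (hCg 0)
  have hFd : ∀ x, HasDerivAt F (phi x * g' x - x * (phi x * g x)) x := by
    intro x
    have := (hasDerivAt_phi x).mul (hg x)
    exact this.congr_deriv (Eq.symm (by ring))
  have hFtop : Tendsto F atTop (𝓝 0) := by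
    apply squeeze_zero_norm (a := fun x => Cg * phi x)
    · intro x
      rw [Real.norm_eq_abs, abs_mul, abs_of_nonneg (phi_nonneg x)]
      calc phi x * |g x| ≤ phi x * Cg := mul_le_mul_of_nonneg_left (hCg x) (phi_nonneg x)
        _ = Cg * phi x := by ring
    · simpa using phi_tendsto_atTop.const_mul Cg
  have hFbot : Tendsto F atBot (𝓝 0) := by
    apply squeeze_zero_norm (a := fun x => Cg * phi x)
    · intro x
      rw [Real.norm_eq_abs, abs_mul, abs_of_nonneg (phi_nonneg x)]
      calc phi x * |g x| ≤ phi x * Cg := mul_le_mul_of_nonneg_left (hCg x) (phi_nonneg x)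
        _ = Cg * phi x := by ring
    · simpa using phi_tendsto_atBot.const_mul Cg
  have Isub : Integrable (fun x => phi x * g' x - x * (phi x * g x)) := I1.sub I2
  have h1 : ∫ x in Iic 0, (phi x * g' x - x * (phi x * g x)) = F 0 - 0 :=
    integral_Iic_of_hasDerivAt_of_tendsto' (fun x _ => hFd x) Isub.integrableOn hFbot
  have h2 : ∫ x in Ioi 0, (phi x * g' x - x * (phi x * g x)) = 0 - F 0 :=
    integral_Ioi_of_hasDerivAt_of_tendsto' (fun x _ => hFd x) Isub.integrableOn hFtop
  have h3 : ∫ x, (phi x * g' x - x * (phi x * g x)) = 0 := by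
    rw [← intervalIntegral.integral_Iic_add_Ioi Isub.integrableOn Isub.integrableOn, h1, h2]
    ring
  rw [integral_sub I1 I2] at h3
  have h4 : ∫ x, phi x * (x * g x) = ∫ x, x * (phi x * g x) := by
    congr 1; funext x; ring
  rw [h4]
  linarith


section GammaSide

lemma ae_ne_zero : ∀ᵐ x : ℝ, x ≠ (0:ℝ) := by
  rw [ae_iff]
  simpa using measure_singleton (0:ℝ)

lemma integrableOn_rpow_exp {s : ℝ} (hs : -1 < s) :
    IntegrableOn (fun x : ℝ => x ^ s * Real.exp (-(1/2 * x))) (Ioi 0) := by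
  have h := integrableOn_rpow_mul_exp_neg_mul_rpow (p := 1) (b := 1/2) hs one_pos (by norm_num)
  refine h.congr_fun (fun x _ => ?_) measurableSet_Ioi
  simp only [Real.rpow_one]
  ring_nf

lemma gamma_ibp {r : ℝ} (hr : 0 < r) {h h' : ℝ → ℝ} {Ch C : ℝ}
    (hhd : ∀ x ∈ Ioi (0:ℝ), HasDerivAt h (h' x) x)
    (hhc : Continuous h) (hh'c : ContinuousOn h' (Ioi 0))
    (hCh : ∀ x, |h x| ≤ Ch) (hC : ∀ x ∈ Ioi (0:ℝ), |x * h' x| ≤ C * Real.sqrt x) :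
    ∫ x, x * h x ∂(gammaMeasure (r/2) (1/2)) =
      ∫ x, (2 * (x * h' x) + r * h x) ∂(gammaMeasure (r/2) (1/2)) := by
  have hα : 0 < r/2 := by linarith
  have hhalf : (0:ℝ) < 1/2 := by norm_num
  set c := ((1:ℝ)/2) ^ (r/2) / Real.Gamma (r/2) with hcdef
  have hc0 : 0 < c := div_pos (Real.rpow_pos_of_pos hhalf _) (Real.Gamma_pos_of_pos hα)
  have hp_meas := measurable_gammaPDFReal (r/2) (1/2)
  have hp0 := gammaPDFReal_nonneg hα hhalf
  have hCh0 : 0 ≤ Ch := le_trans (abs_nonneg _) (hCh 0)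
  have hC0 : 0 ≤ C := by
    have h1 := hC 1 (by norm_num)
    have h2 := le_trans (abs_nonneg _) h1
    simpa using h2
  rw [show gammaMeasure (r/2) (1/2)
      = volume.withDensity (fun x => ENNReal.ofReal (gammaPDFReal (r/2) (1/2) x)) from rfl,
    integral_withDensity_ofReal hp_meas hp0, integral_withDensity_ofReal hp_meas hp0]
  have hres : ∀ G : ℝ → ℝ, ∫ x, gammaPDFReal (r/2) (1/2) x * G x
      = ∫ x in Ioi 0, gammaPDFReal (r/2) (1/2) x * G x := by
    intro G
    refine (setIntegral_eq_integral_of_ae_compl_eq_zero ?_).symm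
    filter_upwards [ae_ne_zero] with x hx0 hxmem
    have hxneg : x < 0 := lt_of_le_of_ne (by simpa [not_lt] using hxmem) hx0
    rw [gammaPDFReal, if_neg (not_le.mpr hxneg), zero_mul]
  rw [hres, hres]
  have hpval : ∀ x : ℝ, 0 < x →
      gammaPDFReal (r/2) (1/2) x = c * x ^ (r/2 - 1) * Real.exp (-(1/2 * x)) := by
    intro x hx
    rw [gammaPDFReal, if_pos hx.le, hcdef]
  set F := fun x : ℝ => 2 * (c * (x ^ (r/2) * Real.exp (-(1/2 * x)))) * h x with hFdef
  set D := fun x : ℝ => gammaPDFReal (r/2) (1/2) x * (2 * (x * h' x) + (r - x) * h x) with hDdef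
  have hderiv : ∀ x ∈ Ioi (0:ℝ), HasDerivAt F (D x) x := by
    intro x hx
    have hx0 : (0:ℝ) < x := hx
    have h1 : HasDerivAt (fun x : ℝ => x ^ (r/2)) (r/2 * x ^ (r/2 - 1)) x :=
      Real.hasDerivAt_rpow_const (Or.inl hx0.ne')
    have h2 : HasDerivAt (fun x : ℝ => Real.exp (-(1/2 * x)))
        (-(1/2) * Real.exp (-(1/2 * x))) x := by
      have hlin : HasDerivAt (fun x : ℝ => -(1/2 * x)) (-(1/2)) x := by
        exact (((hasDerivAt_id x).const_mul ((1:ℝ)/2)).neg).congr_deriv (by ring)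
      have := hlin.exp
      convert this using 1
      ring
    have h3 := (((h1.mul h2).const_mul c).const_mul 2).mul (hhd x hx)
    refine h3.congr_deriv (Eq.symm ?_)
    rw [hDdef]
    simp only [Pi.mul_apply]
    rw [hpval x hx0]
    have hx1 : x ^ (r/2 - 1) * x = x ^ (r/2) := by
      rw [← Real.rpow_add_one hx0.ne']
      ring_nf
    linear_combination (c * Real.exp (-(1/2 * x)) *
      (2 * h' x - h x)) * hx1
  have hexp_cont : Continuous (fun x : ℝ => Real.exp (-(1/2 * x))) := by fun_prop
  have hcont : ContinuousWithinAt F (Ici 0) 0 := by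
    have h1 : ContinuousAt (fun x : ℝ => x ^ (r/2)) 0 :=
      Real.continuousAt_rpow_const 0 (r/2) (Or.inr hα.le)
    exact ((continuousAt_const.mul (continuousAt_const.mul (h1.mul
      hexp_cont.continuousAt))).mul hhc.continuousAt).continuousWithinAt
  have htend : Tendsto (fun x : ℝ => x ^ (r/2) * Real.exp (-(1/2 * x))) atTop (𝓝 0) := by
    refine (tendsto_rpow_mul_exp_neg_mul_atTop_nhds_zero (r/2) (1/2) (by norm_num)).congr
      (fun x => ?_)
    ring_nf
  have htop : Tendsto F atTop (𝓝 0) := by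
    have hb : Tendsto (fun x : ℝ => (2*c*Ch) * (x ^ (r/2) * Real.exp (-(1/2 * x)))) atTop (𝓝 0) := by
      simpa using htend.const_mul (2*c*Ch)
    refine squeeze_zero_norm' ?_ hb
    filter_upwards [eventually_gt_atTop (0:ℝ)] with x hx
    have hxα : 0 ≤ x ^ (r/2) := (Real.rpow_pos_of_pos hx _).le
    rw [Real.norm_eq_abs, hFdef]
    simp only
    rw [abs_mul]
    have hpos : 0 ≤ 2 * (c * (x ^ (r/2) * Real.exp (-(1/2 * x)))) := by positivity
    rw [abs_of_nonneg hpos]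
    calc 2 * (c * (x ^ (r/2) * Real.exp (-(1/2 * x)))) * |h x|
        ≤ 2 * (c * (x ^ (r/2) * Real.exp (-(1/2 * x)))) * Ch :=
          mul_le_mul_of_nonneg_left (hCh x) hpos
      _ = (2*c*Ch) * (x ^ (r/2) * Real.exp (-(1/2 * x))) := by ring
  have hpcont : ContinuousOn (gammaPDFReal (r/2) (1/2)) (Ioi 0) := by
    have h1 : ContinuousOn (fun x : ℝ => c * x ^ (r/2 - 1) * Real.exp (-(1/2 * x))) (Ioi 0) := by
      refine ContinuousOn.mul (ContinuousOn.mul continuousOn_const ?_) hexp_cont.continuousOn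
      intro x hx
      exact (Real.continuousAt_rpow_const x (r/2 - 1) (Or.inl (ne_of_gt hx))).continuousWithinAt
    exact fun x hx => ((h1 x hx).congr (fun y hy => hpval y hy) (hpval x hx))
  -- bound helpers
  have hB : ∀ x ∈ Ioi (0:ℝ), |2 * (x * h' x) + (r - x) * h x|
      ≤ 2 * (C * Real.sqrt x) + (r + x) * Ch := by
    intro x hx
    have hx0 : (0:ℝ) < x := hx
    have h1 := hC x hx
    have h2 := hCh x
    have habs : |r - x| ≤ r + x := by
      rw [abs_le]; constructor <;> nlinarith
    calc |2 * (x * h' x) + (r - x) * h x| ≤ |2 * (x * h' x)| + |(r - x) * h x| := abs_add_le _ _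
      _ = 2 * |x * h' x| + |r - x| * |h x| := by
          rw [abs_mul (r - x) (h x), abs_mul 2 (x * h' x)]; norm_num
      _ ≤ 2 * (C * Real.sqrt x) + (r + x) * Ch := by
          have hm := mul_le_mul habs h2 (abs_nonneg _) (by positivity)
          linarith
  have he1 : ∀ x : ℝ, 0 < x → x ^ (r/2 - 1) * Real.sqrt x = x ^ (r/2 - 1/2) := by
    intro x hx
    rw [Real.sqrt_eq_rpow, ← Real.rpow_add hx]
    ring_nf
  have he2 : ∀ x : ℝ, 0 < x → x ^ (r/2 - 1) * x = x ^ (r/2) := by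
    intro x hx
    rw [← Real.rpow_add_one hx.ne']
    ring_nf
  have hint1 : IntegrableOn (fun x : ℝ => x ^ (r/2 - 1) * Real.exp (-(1/2 * x))) (Ioi 0) :=
    integrableOn_rpow_exp (by linarith)
  have hint2 : IntegrableOn (fun x : ℝ => x ^ (r/2 - 1/2) * Real.exp (-(1/2 * x))) (Ioi 0) :=
    integrableOn_rpow_exp (by linarith)
  have hint3 : IntegrableOn (fun x : ℝ => x ^ (r/2) * Real.exp (-(1/2 * x))) (Ioi 0) :=
    integrableOn_rpow_exp (by linarith)
  have hD_int : IntegrableOn D (Ioi 0) := by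
    have hMint : IntegrableOn (fun x : ℝ => (2*C*c) * (x ^ (r/2 - 1/2) * Real.exp (-(1/2 * x)))
        + ((r*Ch*c) * (x ^ (r/2 - 1) * Real.exp (-(1/2 * x)))
          + (Ch*c) * (x ^ (r/2) * Real.exp (-(1/2 * x))))) (Ioi 0) :=
      (hint2.const_mul _).add ((hint1.const_mul _).add (hint3.const_mul _))
    refine Integrable.mono' hMint ?_ ?_
    · exact (hpcont.mul ((continuousOn_const.mul (continuousOn_id.mul hh'c)).add
        (ContinuousOn.mul (by fun_prop) hhc.continuousOn))).aestronglyMeasurable measurableSet_Ioi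
    · rw [ae_restrict_iff' measurableSet_Ioi]
      refine ae_of_all _ (fun x hx => ?_)
      have hx0 : (0:ℝ) < x := hx
      rw [Real.norm_eq_abs, hDdef]
      simp only
      rw [abs_mul, hpval x hx0, abs_of_nonneg (by positivity :
        (0:ℝ) ≤ c * x ^ (r/2 - 1) * Real.exp (-(1/2 * x)))]
      calc c * x ^ (r/2 - 1) * Real.exp (-(1/2 * x)) * |2 * (x * h' x) + (r - x) * h x|
          ≤ c * x ^ (r/2 - 1) * Real.exp (-(1/2 * x)) * (2 * (C * Real.sqrt x) + (r + x) * Ch) :=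
            mul_le_mul_of_nonneg_left (hB x hx) (by positivity)
        _ = (2*C*c) * (x ^ (r/2 - 1/2) * Real.exp (-(1/2 * x)))
            + ((r*Ch*c) * (x ^ (r/2 - 1) * Real.exp (-(1/2 * x)))
              + (Ch*c) * (x ^ (r/2) * Real.exp (-(1/2 * x)))) := by
            linear_combination (2 * C * Real.exp (-(1/2 * x)) * c) * he1 x hx0
              + (Ch * Real.exp (-(1/2 * x)) * c) * he2 x hx0
  have hI1 : IntegrableOn (fun x : ℝ => gammaPDFReal (r/2) (1/2) x * (x * h x)) (Ioi 0) := by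
    refine Integrable.mono' ((hint3.const_mul (Ch*c))) ?_ ?_
    · exact (hpcont.mul (continuousOn_id.mul hhc.continuousOn)).aestronglyMeasurable
        measurableSet_Ioi
    · rw [ae_restrict_iff' measurableSet_Ioi]
      refine ae_of_all _ (fun x hx => ?_)
      have hx0 : (0:ℝ) < x := hx
      rw [Real.norm_eq_abs, abs_mul, hpval x hx0, abs_of_nonneg (by positivity :
        (0:ℝ) ≤ c * x ^ (r/2 - 1) * Real.exp (-(1/2 * x))), abs_mul, abs_of_nonneg hx0.le]
      calc c * x ^ (r/2 - 1) * Real.exp (-(1/2 * x)) * (x * |h x|)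
          ≤ c * x ^ (r/2 - 1) * Real.exp (-(1/2 * x)) * (x * Ch) := by
            refine mul_le_mul_of_nonneg_left ?_ (by positivity)
            exact mul_le_mul_of_nonneg_left (hCh x) hx0.le
        _ = (Ch*c) * (x ^ (r/2) * Real.exp (-(1/2 * x))) := by
            linear_combination (Ch * Real.exp (-(1/2 * x)) * c) * he2 x hx0
  have hI2 : IntegrableOn (fun x : ℝ => gammaPDFReal (r/2) (1/2) x
      * (2 * (x * h' x) + r * h x)) (Ioi 0) := by
    have hMint : IntegrableOn (fun x : ℝ => (2*C*c) * (x ^ (r/2 - 1/2) * Real.exp (-(1/2 * x)))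
        + (r*Ch*c) * (x ^ (r/2 - 1) * Real.exp (-(1/2 * x)))) (Ioi 0) :=
      (hint2.const_mul _).add (hint1.const_mul _)
    refine Integrable.mono' hMint ?_ ?_
    · exact (hpcont.mul ((continuousOn_const.mul (continuousOn_id.mul hh'c)).add
        (continuousOn_const.mul hhc.continuousOn))).aestronglyMeasurable measurableSet_Ioi
    · rw [ae_restrict_iff' measurableSet_Ioi]
      refine ae_of_all _ (fun x hx => ?_)
      have hx0 : (0:ℝ) < x := hx
      have hb2 : |2 * (x * h' x) + r * h x| ≤ 2 * (C * Real.sqrt x) + r * Ch := by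
        calc |2 * (x * h' x) + r * h x| ≤ |2 * (x * h' x)| + |r * h x| := abs_add_le _ _
          _ = 2 * |x * h' x| + r * |h x| := by
              rw [abs_mul r (h x), abs_mul 2 (x * h' x), abs_of_nonneg hr.le]; norm_num
          _ ≤ 2 * (C * Real.sqrt x) + r * Ch := by
              have hm := mul_le_mul_of_nonneg_left (hCh x) hr.le
              have hm2 := hC x hx
              linarith
      rw [Real.norm_eq_abs, abs_mul, hpval x hx0, abs_of_nonneg (by positivity :
        (0:ℝ) ≤ c * x ^ (r/2 - 1) * Real.exp (-(1/2 * x)))]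
      calc c * x ^ (r/2 - 1) * Real.exp (-(1/2 * x)) * |2 * (x * h' x) + r * h x|
          ≤ c * x ^ (r/2 - 1) * Real.exp (-(1/2 * x)) * (2 * (C * Real.sqrt x) + r * Ch) :=
            mul_le_mul_of_nonneg_left hb2 (by positivity)
        _ = (2*C*c) * (x ^ (r/2 - 1/2) * Real.exp (-(1/2 * x)))
            + (r*Ch*c) * (x ^ (r/2 - 1) * Real.exp (-(1/2 * x))) := by
            linear_combination (2 * C * Real.exp (-(1/2 * x)) * c) * he1 x hx0
  have hFTC : ∫ x in Ioi 0, D x = 0 - F 0 :=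
    integral_Ioi_of_hasDerivAt_of_tendsto hcont hderiv hD_int htop
  have hF0 : F 0 = 0 := by
    rw [hFdef]
    simp [Real.zero_rpow hα.ne']
  have hDsplit : ∀ x : ℝ, D x = gammaPDFReal (r/2) (1/2) x * (2 * (x * h' x) + r * h x)
      - gammaPDFReal (r/2) (1/2) x * (x * h x) := by
    intro x
    rw [hDdef]
    ring
  have hzero : (∫ x in Ioi 0, gammaPDFReal (r/2) (1/2) x * (2 * (x * h' x) + r * h x))
      - ∫ x in Ioi 0, gammaPDFReal (r/2) (1/2) x * (x * h x) = 0 := by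
    rw [← integral_sub hI2 hI1]
    rw [hF0, sub_zero] at hFTC
    refine Eq.trans ?_ hFTC
    exact integral_congr_ae (ae_of_all _ (fun x => (hDsplit x).symm))
  linarith

end GammaSide

lemma gamma_ae_pos {r : ℝ} (hr : 0 < r) : ∀ᵐ x ∂(gammaMeasure (r/2) (1/2)), 0 < x := by
  rw [ae_iff]
  have hset : {x : ℝ | ¬ 0 < x} = Iic 0 := by ext x; simp
  rw [hset, gammaMeasure, withDensity_apply _ measurableSet_Iic,
    setLIntegral_congr (Iio_ae_eq_Iic (a := (0:ℝ))).symm]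
  exact lintegral_gammaPDF_of_nonpos le_rfl

lemma gaussian_integrable_one_add_abs : Integrable (fun y => 1 + |y|) (gaussianReal 0 1) := by
  rw [N_eq, integrable_withDensity_ofReal phi_continuous.measurable phi_nonneg]
  have h := phi_integrable.add abs_mul_phi_integrable
  refine h.congr (ae_of_all _ fun y => ?_)
  simp only [Pi.add_apply]
  ring

lemma gamma_integrable_one_add_abs {r : ℝ} (hr : 0 < r) :
    Integrable (fun x => 1 + |x|) (gammaMeasure (r/2) (1/2)) := by
  have hα : 0 < r/2 := by linarith
  have hhalf : (0:ℝ) < 1/2 := by norm_num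
  set c := ((1:ℝ)/2) ^ ((r:ℝ)/2) / Real.Gamma (r/2) with hcdef
  have hp_meas := measurable_gammaPDFReal (r/2) (1/2)
  have hp0 := gammaPDFReal_nonneg hα hhalf
  rw [show gammaMeasure (r/2) (1/2)
      = volume.withDensity (fun x => ENNReal.ofReal (gammaPDFReal (r/2) (1/2) x)) from rfl,
    integrable_withDensity_ofReal hp_meas hp0]
  have hint1 := integrableOn_rpow_exp (s := r/2 - 1) (by linarith)
  have hint3 := integrableOn_rpow_exp (s := r/2) (by linarith)
  have hOn : IntegrableOn (fun x => gammaPDFReal (r/2) (1/2) x * (1 + |x|)) (Ioi 0) := by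
    refine Integrable.mono' ((hint1.const_mul c).add (hint3.const_mul c)) ?_ ?_
    · exact ((hp_meas.mul (by fun_prop)).aestronglyMeasurable).restrict
    · rw [ae_restrict_iff' measurableSet_Ioi]
      refine ae_of_all _ fun x hx => ?_
      have hx0 : (0:ℝ) < x := hx
      have he2 : x ^ (r/2 - 1) * x = x ^ ((r:ℝ)/2) := by
        rw [← Real.rpow_add_one hx0.ne']; ring_nf
      rw [Real.norm_eq_abs, abs_mul, abs_of_nonneg (hp0 x),
        abs_of_nonneg (by positivity : (0:ℝ) ≤ 1 + |x|), abs_of_nonneg hx0.le,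
        gammaPDFReal, if_pos hx0.le, ← hcdef]
      have heq : c * x ^ (r/2 - 1) * Real.exp (-(1/2 * x)) * (1 + x)
          = c * (x ^ (r/2 - 1) * Real.exp (-(1/2 * x)))
            + c * (x ^ ((r:ℝ)/2) * Real.exp (-(1/2 * x))) := by
        linear_combination (c * Real.exp (-(1/2 * x))) * he2
      rw [heq]
      simp only [Pi.add_apply]
      exact le_refl _
  refine hOn.integrable_of_ae_notMem_eq_zero ?_
  filter_upwards [ae_ne_zero] with x hx0 hmem
  have hxneg : x < 0 := lt_of_le_of_ne (by simpa [not_lt] using hmem) hx0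
  rw [gammaPDFReal, if_neg (not_le.mpr hxneg), zero_mul]

lemma sqrt_le_one_add_abs (x : ℝ) : Real.sqrt x ≤ 1 + |x| := by
  rcases le_or_gt x 0 with hx | hx
  · rw [Real.sqrt_eq_zero_of_nonpos hx]
    positivity
  · have h1 : Real.sqrt x * Real.sqrt x = x := Real.mul_self_sqrt hx.le
    nlinarith [Real.sqrt_nonneg x, le_abs_self x, sq_nonneg (Real.sqrt x - 1)]


end SVGAux

open SVGAux

theorem svg_fixed_point_centered_equilibrium
    {Ω : Type*} [MeasureSpace Ω] [IsProbabilityMeasure (ℙ : Measure Ω)]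
    (r σ : ℝ) (hr : 0 < r) (hσ : 0 < σ)
    (X Y : Ω → ℝ)
    (hX : Measure.map X ℙ = gammaMeasure (r / 2) (1 / 2))
    (hY : Measure.map Y ℙ = gaussianReal 0 1)
    (hXY : IndepFun X Y ℙ)
    (Z : Ω → ℝ) (hZ : ∀ ω, Z ω = σ * Real.sqrt (X ω) * Y ω) :
    ∀ f : ℝ → ℝ, ContDiff ℝ 2 f →
      (∃ C, ∀ x, |f x| ≤ C) → (∃ C, ∀ x, |deriv f x| ≤ C) →
      (∃ C, ∀ x, |deriv (deriv f) x| ≤ C) →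
      ∫ ω, Z ω * f (Z ω) ∂ℙ =
        σ ^ 2 * ∫ ω, (Z ω * deriv (deriv f) (Z ω) + r * deriv f (Z ω)) ∂ℙ := by
  intro f hf hbf hbf' hbf''
  obtain ⟨Cf, hCf⟩ := hbf
  obtain ⟨Cf', hCf'⟩ := hbf'
  obtain ⟨Cf'', hCf''⟩ := hbf''
  have hCf0 : 0 ≤ Cf := le_trans (abs_nonneg _) (hCf 0)
  have hCf'0 : 0 ≤ Cf' := le_trans (abs_nonneg _) (hCf' 0)
  have hCf''0 : 0 ≤ Cf'' := le_trans (abs_nonneg _) (hCf'' 0)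
  -- smoothness facts
  have hf2 : ContDiff ℝ ((1:ℕ∞) + 1) f := by exact_mod_cast hf
  have hfd : Differentiable ℝ f := hf.differentiable (by norm_num)
  have hf1 : ContDiff ℝ 1 (deriv f) := (contDiff_succ_iff_deriv.mp hf2).2.2
  have hfd' : Differentiable ℝ (deriv f) := hf1.differentiable one_ne_zero
  have hf'c : Continuous (deriv f) := hfd'.continuous
  have hf''c : Continuous (deriv (deriv f)) := hf1.continuous_deriv le_rfl
  -- measures
  have hα : 0 < r/2 := by linarith
  have hγprob : IsProbabilityMeasure (gammaMeasure (r/2) (1/2)) :=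
    isProbabilityMeasure_gammaMeasure hα (by norm_num)
  have hXm : AEMeasurable X ℙ := by
    apply aemeasurable_of_map_neZero
    rw [hX]
    exact ⟨hγprob.ne_zero⟩
  have hYm : AEMeasurable Y ℙ := by
    apply aemeasurable_of_map_neZero
    rw [hY]
    exact ⟨(inferInstance : IsProbabilityMeasure (gaussianReal 0 1)).ne_zero⟩
  have hjoint : Measure.map (fun ω => (X ω, Y ω)) ℙ
      = (gammaMeasure (r/2) (1/2)).prod (gaussianReal 0 1) := by
    rw [← hX, ← hY]
    exact (indepFun_iff_map_prod_eq_prod_map_map hXm hYm).mp hXY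
  set γ := gammaMeasure (r/2) (1/2) with hγdef
  set N := gaussianReal 0 1 with hNdef
  set G₁ : ℝ × ℝ → ℝ :=
    fun q => σ * Real.sqrt q.1 * q.2 * f (σ * Real.sqrt q.1 * q.2) with hG1def
  set G₂ : ℝ × ℝ → ℝ := fun q =>
    σ * Real.sqrt q.1 * q.2 * deriv (deriv f) (σ * Real.sqrt q.1 * q.2)
      + r * deriv f (σ * Real.sqrt q.1 * q.2) with hG2def
  have harg : Continuous fun q : ℝ × ℝ => σ * Real.sqrt q.1 * q.2 :=
    ((continuous_const.mul (Real.continuous_sqrt.comp continuous_fst)).mul continuous_snd)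
  have hG1c : Continuous G₁ := harg.mul (hfd.continuous.comp harg)
  have hG2c : Continuous G₂ :=
    (harg.mul (hf''c.comp harg)).add (continuous_const.mul (hf'c.comp harg))
  have hXYm : AEMeasurable (fun ω => (X ω, Y ω)) ℙ := hXm.prodMk hYm
  have hL : ∫ ω, Z ω * f (Z ω) ∂ℙ = ∫ q, G₁ q ∂(γ.prod N) := by
    rw [← hjoint, integral_map hXYm hG1c.aestronglyMeasurable]
    exact integral_congr_ae (ae_of_all _ fun ω => by simp only [hG1def, hZ ω])
  have hR : ∫ ω, (Z ω * deriv (deriv f) (Z ω) + r * deriv f (Z ω)) ∂ℙ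
      = ∫ q, G₂ q ∂(γ.prod N) := by
    rw [← hjoint, integral_map hXYm hG2c.aestronglyMeasurable]
    exact integral_congr_ae (ae_of_all _ fun ω => by simp only [hG2def, hZ ω])
  rw [hL, hR]
  -- product integrability
  have hone_le : ∀ x y : ℝ, (1:ℝ) ≤ (1 + |x|) * (1 + |y|) := by
    intro x y
    nlinarith [abs_nonneg x, abs_nonneg y]
  have hPint : Integrable (fun q : ℝ × ℝ => (1 + |q.1|) * (1 + |q.2|)) (γ.prod N) :=
    (gamma_integrable_one_add_abs hr).mul_prod gaussian_integrable_one_add_abs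
  have hbound1 : ∀ (x y t : ℝ) (Ct : ℝ), |t| ≤ Ct →
      |σ * Real.sqrt x * y * t| ≤ σ * Ct * ((1 + |x|) * (1 + |y|)) := by
    intro x y t Ct ht
    rw [abs_mul, abs_mul, abs_mul, abs_of_nonneg hσ.le,
      abs_of_nonneg (Real.sqrt_nonneg x)]
    calc σ * Real.sqrt x * |y| * |t| ≤ σ * (1 + |x|) * (1 + |y|) * Ct := by
          gcongr
          · exact sqrt_le_one_add_abs x
          · linarith [abs_nonneg y]
      _ = σ * Ct * ((1 + |x|) * (1 + |y|)) := by ring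
  have hG1int : Integrable G₁ (γ.prod N) := by
    refine Integrable.mono' (hPint.const_mul (σ * Cf)) hG1c.aestronglyMeasurable
      (ae_of_all _ fun q => ?_)
    rw [Real.norm_eq_abs]
    exact hbound1 q.1 q.2 _ Cf (hCf _)
  have hG2int : Integrable G₂ (γ.prod N) := by
    refine Integrable.mono' (hPint.const_mul (σ * Cf'' + r * Cf'))
      hG2c.aestronglyMeasurable (ae_of_all _ fun q => ?_)
    rw [Real.norm_eq_abs]
    calc |G₂ q| ≤ |σ * Real.sqrt q.1 * q.2 * deriv (deriv f) (σ * Real.sqrt q.1 * q.2)|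
        + |r * deriv f (σ * Real.sqrt q.1 * q.2)| := abs_add_le _ _
      _ ≤ σ * Cf'' * ((1 + |q.1|) * (1 + |q.2|)) + r * Cf' * ((1 + |q.1|) * (1 + |q.2|)) := by
          refine add_le_add (hbound1 q.1 q.2 _ Cf'' (hCf'' _)) ?_
          rw [abs_mul, abs_of_nonneg hr.le]
          calc r * |deriv f (σ * Real.sqrt q.1 * q.2)| ≤ r * Cf' := by
                exact mul_le_mul_of_nonneg_left (hCf' _) hr.le
            _ ≤ r * Cf' * ((1 + |q.1|) * (1 + |q.2|)) := by
                nlinarith [hone_le q.1 q.2, mul_nonneg hr.le hCf'0]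
      _ = (σ * Cf'' + r * Cf') * ((1 + |q.1|) * (1 + |q.2|)) := by ring
  have hHint : Integrable (fun q : ℝ × ℝ => q.1 * deriv f (σ * Real.sqrt q.1 * q.2))
      (γ.prod N) := by
    refine Integrable.mono' (hPint.const_mul Cf')
      ((continuous_fst.mul (hf'c.comp harg)).aestronglyMeasurable)
      (ae_of_all _ fun q => ?_)
    rw [Real.norm_eq_abs, abs_mul]
    calc |q.1| * |deriv f (σ * Real.sqrt q.1 * q.2)| ≤ (1 + |q.1|) * Cf' := by
          refine mul_le_mul (by linarith [abs_nonneg q.1]) (hCf' _) (abs_nonneg _) ?_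
          positivity
      _ ≤ Cf' * ((1 + |q.1|) * (1 + |q.2|)) := by
          nlinarith [abs_nonneg q.1, abs_nonneg q.2, mul_nonneg (abs_nonneg q.1) hCf'0]
  -- step 2: gaussian integration by parts for fixed x > 0
  have step2 : ∀ x : ℝ, 0 < x →
      ∫ y, G₁ (x, y) ∂N = σ ^ 2 * ∫ y, x * deriv f (σ * Real.sqrt x * y) ∂N := by
    intro x hx
    set c := σ * Real.sqrt x with hcdef
    have hc0 : 0 < c := mul_pos hσ (Real.sqrt_pos.mpr hx)
    have hg : ∀ y : ℝ, HasDerivAt (fun y => f (c * y)) (deriv f (c * y) * c) y := by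
      intro y
      have h1 : HasDerivAt (fun y : ℝ => c * y) c y := by
        simpa using (hasDerivAt_id y).const_mul c
      exact (hfd (c * y)).hasDerivAt.comp y h1
    have hkey := gaussian_ibp (g := fun y => f (c * y))
      (g' := fun y => deriv f (c * y) * c) hg
      ((hf'c.comp (continuous_const.mul continuous_id)).mul continuous_const)
      (Cg := Cf) (Cg' := Cf' * c) (fun y => hCf _) (fun y => by
        rw [abs_mul, abs_of_nonneg hc0.le]
        exact mul_le_mul_of_nonneg_right (hCf' _) hc0.le)
    -- hkey : ∫ y, y * f (c*y) ∂N = ∫ y, deriv f (c*y) * c ∂N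
    have h2 : ∫ y, G₁ (x, y) ∂N = c * ∫ y, y * f (c * y) ∂N := by
      rw [← integral_const_mul]
      exact integral_congr_ae (ae_of_all _ fun y => by simp only [hG1def]; ring)
    have h3 : ∫ y, deriv f (c * y) * c ∂N = (∫ y, deriv f (c * y) ∂N) * c :=
      integral_mul_const _ _
    have h4 : ∫ y, x * deriv f (σ * Real.sqrt x * y) ∂N = x * ∫ y, deriv f (c * y) ∂N := by
      rw [← integral_const_mul]
    have hss : Real.sqrt x * Real.sqrt x = x := Real.mul_self_sqrt hx.le
    rw [h2, hkey, h3, h4]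
    rw [hcdef]
    linear_combination (σ ^ 2 * (∫ y, deriv f (σ * Real.sqrt x * y) ∂N)) * hss
  -- step 4: gamma integration by parts for fixed y
  have step4 : ∀ y : ℝ,
      ∫ x, x * deriv f (σ * Real.sqrt x * y) ∂γ = ∫ x, G₂ (x, y) ∂γ := by
    intro y
    have hhd : ∀ x ∈ Ioi (0:ℝ), HasDerivAt (fun x => deriv f (σ * Real.sqrt x * y))
        ((fun x => deriv (deriv f) (σ * Real.sqrt x * y)
          * (σ * (1 / (2 * Real.sqrt x)) * y)) x) x := by
      intro x hx
      have hx0 : (0:ℝ) < x := hx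
      have hinner : HasDerivAt (fun x => σ * Real.sqrt x * y)
          (σ * (1 / (2 * Real.sqrt x)) * y) x :=
        ((Real.hasDerivAt_sqrt hx0.ne').const_mul σ).mul_const y
      exact (hfd' _).hasDerivAt.comp x hinner
    have hhc : Continuous (fun x => deriv f (σ * Real.sqrt x * y)) :=
      hf'c.comp ((continuous_const.mul Real.continuous_sqrt).mul continuous_const)
    have hh'c : ContinuousOn (fun x => deriv (deriv f) (σ * Real.sqrt x * y)
        * (σ * (1 / (2 * Real.sqrt x)) * y)) (Ioi 0) := by
      refine ContinuousOn.mul ((hf''c.comp ((continuous_const.mul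
        Real.continuous_sqrt).mul continuous_const)).continuousOn) ?_
      refine ContinuousOn.mul (ContinuousOn.mul continuousOn_const ?_) continuousOn_const
      refine ContinuousOn.div continuousOn_const
        (continuous_const.mul Real.continuous_sqrt).continuousOn (fun x hx => ?_)
      have : (0:ℝ) < Real.sqrt x := Real.sqrt_pos.mpr hx
      positivity
    have hC : ∀ x ∈ Ioi (0:ℝ), |x * (deriv (deriv f) (σ * Real.sqrt x * y)
        * (σ * (1 / (2 * Real.sqrt x)) * y))| ≤ (Cf'' * (σ * |y|) / 2) * Real.sqrt x := by
      intro x hx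
      have hx0 : (0:ℝ) < x := hx
      have hne : Real.sqrt x ≠ 0 := (Real.sqrt_pos.mpr hx0).ne'
      have hss : Real.sqrt x * Real.sqrt x = x := Real.mul_self_sqrt hx0.le
      have hxe : x * (deriv (deriv f) (σ * Real.sqrt x * y)
          * (σ * (1 / (2 * Real.sqrt x)) * y))
          = deriv (deriv f) (σ * Real.sqrt x * y) * (σ * y * Real.sqrt x / 2) := by
        field_simp
        linear_combination (-(deriv (deriv f) (σ * Real.sqrt x * y) * y)) * hss
      have habs2 : |σ * y * Real.sqrt x / 2| = σ * |y| * Real.sqrt x / 2 := by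
        rw [abs_div, abs_mul, abs_mul, abs_of_nonneg hσ.le,
          abs_of_nonneg (Real.sqrt_nonneg x)]
        norm_num
      rw [hxe, abs_mul, habs2]
      calc |deriv (deriv f) (σ * Real.sqrt x * y)| * (σ * |y| * Real.sqrt x / 2)
          ≤ Cf'' * (σ * |y| * Real.sqrt x / 2) :=
            mul_le_mul_of_nonneg_right (hCf'' _) (by positivity)
        _ = (Cf'' * (σ * |y|) / 2) * Real.sqrt x := by ring
    have hg := gamma_ibp hr hhd hhc hh'c (fun x => hCf' _) hC
    calc ∫ x, x * deriv f (σ * Real.sqrt x * y) ∂γ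
        = ∫ x, (2 * (x * (deriv (deriv f) (σ * Real.sqrt x * y)
            * (σ * (1 / (2 * Real.sqrt x)) * y)))
          + r * deriv f (σ * Real.sqrt x * y)) ∂γ := hg
      _ = ∫ x, G₂ (x, y) ∂γ := by
          refine integral_congr_ae ?_
          filter_upwards [gamma_ae_pos hr] with x hx0
          rw [hG2def]
          simp only
          have hne : Real.sqrt x ≠ 0 := (Real.sqrt_pos.mpr hx0).ne'
          have hss : Real.sqrt x * Real.sqrt x = x := Real.mul_self_sqrt hx0.le
          have h2x : 2 * (x * (σ * (1 / (2 * Real.sqrt x)) * y)) = σ * Real.sqrt x * y := by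
            field_simp
            linear_combination (-y) * hss
          linear_combination (deriv (deriv f) (σ * Real.sqrt x * y)) * h2x
  -- assemble
  have e1 : ∫ q, G₁ q ∂(γ.prod N) = ∫ x, ∫ y, G₁ (x, y) ∂N ∂γ := integral_prod _ hG1int
  have e2 : ∫ x, ∫ y, G₁ (x, y) ∂N ∂γ
      = σ ^ 2 * ∫ x, ∫ y, x * deriv f (σ * Real.sqrt x * y) ∂N ∂γ := by
    rw [← integral_const_mul]
    refine integral_congr_ae ?_
    filter_upwards [gamma_ae_pos hr] with x hx
    exact step2 x hx
  have e3 : ∫ x, ∫ y, x * deriv f (σ * Real.sqrt x * y) ∂N ∂γ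
      = ∫ y, ∫ x, x * deriv f (σ * Real.sqrt x * y) ∂γ ∂N :=
    integral_integral_swap hHint
  have e4 : ∫ y, ∫ x, x * deriv f (σ * Real.sqrt x * y) ∂γ ∂N
      = ∫ y, ∫ x, G₂ (x, y) ∂γ ∂N :=
    integral_congr_ae (ae_of_all _ fun y => step4 y)
  have e5 : ∫ y, ∫ x, G₂ (x, y) ∂γ ∂N = ∫ q, G₂ q ∂(γ.prod N) := by
    have hswap : ∫ x, ∫ y, G₂ (x, y) ∂N ∂γ = ∫ y, ∫ x, G₂ (x, y) ∂γ ∂N :=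
      integral_integral_swap hG2int
    rw [← hswap, ← integral_prod _ hG2int]
  rw [e1, e2, e3, e4, e5]
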